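/- For any M ∈ ℕ and fixed ROSt data with ∑_α ξ_α < ∞, the random variable ln( (∑_α ξ_α e^{β√M κ_α}) / (∑_α ξ_α) ) is integrable with respect to the Gaussian measure of the variables κ_α, and its expected absolute value is bounded above by β²M/4 + β√(2M). -/

import Mathlib

open MeasureTheory ProbabilityTheory Real Set Filter Topology ENNReal

lemma gaussHalf_pdf (x : ℝ) :
    gaussianPDFReal 0 ((1/2 : ℝ)).toNNReal x = (Real.sqrt π)⁻¹ * Real.exp (-x^2) := by
  unfold gaussianPDFReal
  rw [Real.coe_toNNReal _ (by norm_num : (0:ℝ) ≤ 1/2)]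
  rw [show 2*π*(1/2:ℝ) = π by ring, show -(x-0)^2/(2*(1/2:ℝ)) = -x^2 by ring]

lemma gaussHalf_lintegral (g : ℝ → ℝ) (hg : Measurable g) (hg0 : ∀ x, 0 ≤ g x)
    (hInt : Integrable (fun x => (Real.sqrt π)⁻¹ * Real.exp (-x^2) * g x)) :
    ∫⁻ x, ENNReal.ofReal (g x) ∂(gaussianReal 0 ((1/2 : ℝ)).toNNReal)
      = ENNReal.ofReal (∫ x, (Real.sqrt π)⁻¹ * Real.exp (-x^2) * g x) := by
  have hv : ((1/2 : ℝ)).toNNReal ≠ 0 := by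
    simp [Real.toNNReal_eq_zero]
  rw [gaussianReal_of_var_ne_zero 0 hv,
    lintegral_withDensity_eq_lintegral_mul _ (measurable_gaussianPDF _ _) hg.ennreal_ofReal]
  have heq : ∀ x, (gaussianPDF 0 ((1/2:ℝ)).toNNReal * fun y => ENNReal.ofReal (g y)) x
      = ENNReal.ofReal ((Real.sqrt π)⁻¹ * Real.exp (-x^2) * g x) := by
    intro x
    simp only [Pi.mul_apply, gaussianPDF, gaussHalf_pdf,
      ← ENNReal.ofReal_mul (by positivity : (0:ℝ) ≤ (Real.sqrt π)⁻¹ * Real.exp (-x^2))]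
  simp_rw [heq]
  rw [← ofReal_integral_eq_lintegral_ofReal hInt
    (ae_of_all _ fun x => mul_nonneg (by positivity) (hg0 x))]

lemma gaussHalf_mgf (t : ℝ) :
    ∫⁻ x, ENNReal.ofReal (Real.exp (t * x)) ∂(gaussianReal 0 ((1/2 : ℝ)).toNNReal)
      = ENNReal.ofReal (Real.exp (t^2/4)) := by
  have key : ∀ x : ℝ, (Real.sqrt π)⁻¹ * Real.exp (-x^2) * Real.exp (t*x)
      = (Real.sqrt π)⁻¹ * Real.exp (t^2/4) * Real.exp (-(x - t/2)^2) := by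
    intro x
    rw [mul_assoc, ← Real.exp_add, mul_assoc, ← Real.exp_add]
    congr 2
    ring
  have hint0 : Integrable (fun x : ℝ => Real.exp (-(x - t/2)^2)) := by
    have := (integrable_exp_neg_mul_sq (one_pos)).comp_sub_right (t/2)
    simpa using this
  have hInt : Integrable (fun x => (Real.sqrt π)⁻¹ * Real.exp (-x^2) * Real.exp (t*x)) := by
    simp_rw [key]
    exact hint0.const_mul _
  rw [gaussHalf_lintegral _ (by fun_prop) (fun x => (Real.exp_pos _).le) hInt]
  congr 1
  simp_rw [key]
  rw [integral_const_mul]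
  have h1 : ∫ x : ℝ, Real.exp (-(x - t/2)^2) = Real.sqrt π := by
    rw [integral_sub_right_eq_self (fun x => Real.exp (-x^2)) (t/2)]
    have := integral_gaussian 1
    simpa using this
  rw [h1]
  have hπ : Real.sqrt π ≠ 0 := by positivity
  field_simp

lemma int_Ioi_x_exp : ∫ x in Ioi (0:ℝ), x * Real.exp (-x^2) = 1/2 := by
  have hderiv : ∀ x ∈ Ici (0:ℝ), HasDerivAt (fun y : ℝ => -Real.exp (-y^2)/2)
      (x * Real.exp (-x^2)) x := by
    intro x _
    have h1 : HasDerivAt (fun y : ℝ => -y^2) (-(2*x)) x := by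
      simpa using (hasDerivAt_pow 2 x).fun_neg
    have h2 := (h1.exp.fun_neg).div_const 2
    refine h2.congr_deriv ?_
    ring
  have hint : IntegrableOn (fun x => x * Real.exp (-x^2)) (Ioi 0) := by
    have := integrable_mul_exp_neg_mul_sq (one_pos)
    simp only [neg_one_mul] at this
    exact this.integrableOn
  have htend : Tendsto (fun y : ℝ => -Real.exp (-y^2)/2) atTop (𝓝 0) := by
    have h0 : Tendsto (fun y : ℝ => Real.exp (-y^2)) atTop (𝓝 0) := by
      have := Real.tendsto_exp_neg_atTop_nhds_zero.comp (tendsto_pow_atTop (two_ne_zero))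
      simpa [Function.comp] using this
    have := (h0.neg).div_const 2
    simpa using this
  have := integral_Ioi_of_hasDerivAt_of_tendsto' hderiv hint htend
  rw [this]
  norm_num

lemma gaussHalf_abs :
    ∫⁻ x, ENNReal.ofReal |x| ∂(gaussianReal 0 ((1/2 : ℝ)).toNNReal)
      = ENNReal.ofReal ((Real.sqrt π)⁻¹) := by
  have i0 : Integrable (fun x : ℝ => |x| * Real.exp (-x^2)) := by
    have := (integrable_mul_exp_neg_mul_sq (one_pos)).abs
    refine this.congr (ae_of_all _ fun x => ?_)
    simp only [abs_mul, abs_of_pos (Real.exp_pos _), neg_one_mul]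
  have hInt : Integrable (fun x => (Real.sqrt π)⁻¹ * Real.exp (-x^2) * |x|) := by
    refine (i0.const_mul ((Real.sqrt π)⁻¹)).congr (ae_of_all _ fun x => ?_)
    ring
  rw [gaussHalf_lintegral _ (by fun_prop) (fun x => abs_nonneg x) hInt]
  congr 1
  have h1 : ∫ x : ℝ, (Real.sqrt π)⁻¹ * Real.exp (-x^2) * |x|
      = (Real.sqrt π)⁻¹ * ∫ x : ℝ, |x| * Real.exp (-x^2) := by
    rw [← integral_const_mul]
    congr 1; funext x; ring
  rw [h1]
  have h2 : ∫ x : ℝ, |x| * Real.exp (-x^2) = 2 * ∫ x in Ioi (0:ℝ), x * Real.exp (-x^2) := by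
    have := integral_comp_abs (f := fun x => x * Real.exp (-x^2))
    simp only [← this]
    congr 1; funext x
    rw [sq_abs]
  rw [h2, int_Ioi_x_exp]
  ring

/-- Integrability of the fugacity term of the ROSt functional: given ROSt data
`(ξ, q)` and centered jointly Gaussian `κ_α` with covariance `q_{α,α'}²/2`,
the random variable `ln((∑_α ξ_α e^{β√M κ_α})/(∑_α ξ_α))` is integrable and its
expected absolute value is at most `β²M/4 + β√(2M)`. -/
theorem stmt2 {Ω : Type*} [MeasureSpace Ω] [IsProbabilityMeasure (ℙ : Measure Ω)]
    (β : ℝ) (hβ : 0 < β) (M : ℕ)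
    (ξ : ℕ → ℝ) (hξ : ∀ a, 0 ≤ ξ a) (hsum : Summable ξ) (hpos : 0 < ∑' a, ξ a)
    (q : ℕ → ℕ → ℝ) (hdiag : ∀ a, q a a = 1)
    (hpsd : ∀ c : ℕ →₀ ℝ, 0 ≤ ∑ a ∈ c.support, ∑ b ∈ c.support, c a * c b * q a b)
    (κ : ℕ → Ω → ℝ) (hκmeas : ∀ a, Measurable (κ a))
    (hκ : ∀ c : ℕ →₀ ℝ,
      Measure.map (fun ω => ∑ a ∈ c.support, c a * κ a ω) ℙ =
        gaussianReal 0
          (∑ a ∈ c.support, ∑ b ∈ c.support, c a * c b * ((q a b) ^ 2 / 2)).toNNReal) :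
    Integrable (fun ω =>
      Real.log ((∑' a, ξ a * Real.exp (β * Real.sqrt M * κ a ω)) / ∑' a, ξ a)) ∧
    ∫ ω, |Real.log ((∑' a, ξ a * Real.exp (β * Real.sqrt M * κ a ω)) / ∑' a, ξ a)|
      ≤ β ^ 2 * M / 4 + β * Real.sqrt (2 * M) := by
  set t : ℝ := β * Real.sqrt M with ht_def
  have ht : 0 ≤ t := mul_nonneg hβ.le (Real.sqrt_nonneg _)
  set S : ℝ := ∑' a, ξ a with hS_def
  have hS : 0 < S := hpos
  set m : ℝ := Real.exp (t^2/4) with hm_def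
  have hm : 0 < m := Real.exp_pos _
  -- law of each κ a
  have hlaw : ∀ a, Measure.map (κ a) ℙ = gaussianReal 0 ((1/2 : ℝ)).toNNReal := by
    intro a
    have h := hκ (Finsupp.single a 1)
    rw [Finsupp.support_single_ne_zero a one_ne_zero] at h
    simp only [Finset.sum_singleton, Finsupp.single_eq_same, one_mul, one_pow, hdiag] at h
    exact h
  -- per-index lintegrals
  have hA : ∀ a, ∫⁻ ω, ENNReal.ofReal (Real.exp (t * κ a ω)) ∂ℙ = ENNReal.ofReal m := by
    intro a
    have hmeas : Measurable (fun x : ℝ => ENNReal.ofReal (Real.exp (t * x))) :=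
      (Real.measurable_exp.comp (measurable_id.const_mul t)).ennreal_ofReal
    rw [← lintegral_map hmeas (hκmeas a), hlaw a, gaussHalf_mgf]
  have hB : ∀ a, ∫⁻ ω, ENNReal.ofReal |κ a ω| ∂ℙ = ENNReal.ofReal ((Real.sqrt π)⁻¹) := by
    intro a
    have hmeas : Measurable (fun x : ℝ => ENNReal.ofReal |x|) :=
      measurable_abs.ennreal_ofReal
    rw [← lintegral_map hmeas (hκmeas a), hlaw a, gaussHalf_abs]
  -- the dominating ENNReal-valued sums
  set F : Ω → ℝ≥0∞ := fun ω => ∑' a, ENNReal.ofReal (ξ a * Real.exp (t * κ a ω)) with hF_def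
  set G : Ω → ℝ≥0∞ := fun ω => ∑' a, ENNReal.ofReal (ξ a * |κ a ω|) with hG_def
  have hFa : ∀ a : ℕ, Measurable (fun ω => ENNReal.ofReal (ξ a * Real.exp (t * κ a ω))) :=
    fun a => ((Real.measurable_exp.comp ((hκmeas a).const_mul t)).const_mul (ξ a)).ennreal_ofReal
  have hGa : ∀ a : ℕ, Measurable (fun ω => ENNReal.ofReal (ξ a * |κ a ω|)) :=
    fun a => (((hκmeas a).abs).const_mul (ξ a)).ennreal_ofReal
  have hFmeas : Measurable F := Measurable.ennreal_tsum hFa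
  have hGmeas : Measurable G := Measurable.ennreal_tsum hGa
  have hFlint : ∫⁻ ω, F ω ∂ℙ = ENNReal.ofReal S * ENNReal.ofReal m := by
    rw [hF_def, lintegral_tsum (fun a => (hFa a).aemeasurable)]
    have h1 : ∀ a : ℕ, ∫⁻ ω, ENNReal.ofReal (ξ a * Real.exp (t * κ a ω)) ∂ℙ
        = ENNReal.ofReal (ξ a) * ENNReal.ofReal m := by
      intro a
      simp_rw [ENNReal.ofReal_mul (hξ a)]
      rw [lintegral_const_mul _ (((hκmeas a).const_mul t).exp.ennreal_ofReal), hA a]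
    simp_rw [h1]
    rw [ENNReal.tsum_mul_right, ← ENNReal.ofReal_tsum_of_nonneg hξ hsum]
  have hGlint : ∫⁻ ω, G ω ∂ℙ = ENNReal.ofReal S * ENNReal.ofReal ((Real.sqrt π)⁻¹) := by
    rw [hG_def, lintegral_tsum (fun a => (hGa a).aemeasurable)]
    have h1 : ∀ a : ℕ, ∫⁻ ω, ENNReal.ofReal (ξ a * |κ a ω|) ∂ℙ
        = ENNReal.ofReal (ξ a) * ENNReal.ofReal ((Real.sqrt π)⁻¹) := by
      intro a
      simp_rw [ENNReal.ofReal_mul (hξ a)]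
      rw [lintegral_const_mul _ ((hκmeas a).abs.ennreal_ofReal)]
      exact congrArg _ (hB a)
    simp_rw [h1]
    rw [ENNReal.tsum_mul_right, ← ENNReal.ofReal_tsum_of_nonneg hξ hsum]
  have hFtop : ∫⁻ ω, F ω ∂ℙ ≠ ⊤ := by
    rw [hFlint]; exact ENNReal.mul_ne_top ENNReal.ofReal_ne_top ENNReal.ofReal_ne_top
  have hGtop : ∫⁻ ω, G ω ∂ℙ ≠ ⊤ := by
    rw [hGlint]; exact ENNReal.mul_ne_top ENNReal.ofReal_ne_top ENNReal.ofReal_ne_top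
  have hFae : ∀ᵐ ω ∂ℙ, F ω ≠ ⊤ := by
    filter_upwards [ae_lt_top hFmeas hFtop] with ω h using h.ne
  have hGae : ∀ᵐ ω ∂ℙ, G ω ≠ ⊤ := by
    filter_upwards [ae_lt_top hGmeas hGtop] with ω h using h.ne
  have hFtoReal : ∀ ω, (F ω).toReal = ∑' a, ξ a * Real.exp (t * κ a ω) := by
    intro ω
    rw [hF_def, ENNReal.tsum_toReal_eq (fun a => ENNReal.ofReal_ne_top)]
    exact tsum_congr fun a => ENNReal.toReal_ofReal (mul_nonneg (hξ a) (Real.exp_pos _).le)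
  have hGtoReal : ∀ ω, (G ω).toReal = ∑' a, ξ a * |κ a ω| := by
    intro ω
    rw [hG_def, ENNReal.tsum_toReal_eq (fun a => ENNReal.ofReal_ne_top)]
    exact tsum_congr fun a => ENNReal.toReal_ofReal (mul_nonneg (hξ a) (abs_nonneg _))
  -- measurability of the log expression
  have hXeq : (fun ω => Real.log ((∑' a, ξ a * Real.exp (t * κ a ω)) / S))
      = fun ω => Real.log ((F ω).toReal / S) := by
    funext ω; rw [hFtoReal ω]
  have hXmeas : Measurable (fun ω => Real.log ((∑' a, ξ a * Real.exp (t * κ a ω)) / S)) := by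
    rw [hXeq]
    exact Real.measurable_log.comp (hFmeas.ennreal_toReal.div_const S)
  -- a positive weight
  obtain ⟨a0, ha0⟩ : ∃ a, 0 < ξ a := by
    by_contra h
    push_neg at h
    have h0 : ∀ a, ξ a = 0 := fun a => le_antisymm (h a) (hξ a)
    have : S = 0 := by rw [hS_def]; simp [h0]
    linarith
  -- integrable pieces
  have iF : Integrable (fun ω => (F ω).toReal) :=
    integrable_toReal_of_lintegral_ne_top hFmeas.aemeasurable hFtop
  have iG : Integrable (fun ω => (G ω).toReal) :=
    integrable_toReal_of_lintegral_ne_top hGmeas.aemeasurable hGtop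
  set D : Ω → ℝ := fun ω => (t^2/4 - 1) + ((F ω).toReal/(S*m) + 2*t*((G ω).toReal/S))
    with hD_def
  have iD : Integrable D :=
    (integrable_const _).add ((iF.div_const _).add ((iG.div_const _).const_mul (2*t)))
  -- the pointwise a.e. bound
  have hbound : ∀ᵐ ω ∂ℙ, |Real.log ((∑' a, ξ a * Real.exp (t * κ a ω)) / S)| ≤ D ω := by
    filter_upwards [hFae, hGae] with ω hFω hGω
    have hsumZ : Summable (fun a => ξ a * Real.exp (t * κ a ω)) := by
      rw [hF_def] at hFω
      refine (ENNReal.summable_toReal hFω).congr fun a => ?_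
      exact ENNReal.toReal_ofReal (mul_nonneg (hξ a) (Real.exp_pos _).le)
    have hsumK' : Summable (fun a => ξ a * |κ a ω|) := by
      rw [hG_def] at hGω
      refine (ENNReal.summable_toReal hGω).congr fun a => ?_
      exact ENNReal.toReal_ofReal (mul_nonneg (hξ a) (abs_nonneg _))
    have habs : Summable (fun a => |ξ a * κ a ω|) :=
      hsumK'.congr fun a => by rw [abs_mul, abs_of_nonneg (hξ a)]
    have hsumK : Summable (fun a => ξ a * κ a ω) := Summable.of_abs habs
    set Z := ∑' a, ξ a * Real.exp (t * κ a ω) with hZ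
    set W := ∑' a, ξ a * κ a ω with hW
    set gg := (G ω).toReal with hgg
    have hgg0 : 0 ≤ gg := ENNReal.toReal_nonneg
    have hZr : (F ω).toReal = Z := hFtoReal ω
    have hZpos : 0 < Z :=
      lt_of_lt_of_le (mul_pos ha0 (Real.exp_pos _))
        (Summable.le_tsum hsumZ a0 fun b _ => mul_nonneg (hξ b) (Real.exp_pos _).le)
    have hWabs : |W| ≤ gg := by
      have h1 : |W| ≤ ∑' a, |ξ a * κ a ω| := by
        have h0 := norm_tsum_le_tsum_norm (f := fun a => ξ a * κ a ω)
          (habs.congr fun a => (Real.norm_eq_abs _).symm)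
        simpa only [Real.norm_eq_abs] using h0
      have h2 : (∑' a, |ξ a * κ a ω|) = gg := by
        rw [hgg, hGtoReal ω]
        exact tsum_congr fun a => by rw [abs_mul, abs_of_nonneg (hξ a)]
      linarith
    -- upper bound
    have hupper : Real.log (Z / S) ≤ t^2/4 + Z/(S*m) - 1 := by
      have h2 : 0 < Z / (S*m) := by positivity
      have h1 : Z / S = (Z / (S*m)) * m := by field_simp
      rw [h1, Real.log_mul (ne_of_gt h2) (ne_of_gt hm)]
      have h3 := Real.log_le_sub_one_of_pos h2
      have h4 : Real.log m = t^2/4 := by rw [hm_def, Real.log_exp]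
      linarith
    -- lower bound
    have hlower : t * W / S ≤ Real.log (Z / S) := by
      set c := t * W / S with hc
      have hterm : ∀ a, Real.exp c * (t * (ξ a * κ a ω) + (1 - c) * ξ a)
          ≤ ξ a * Real.exp (t * κ a ω) := by
        intro a
        have h1 : t * κ a ω - c + 1 ≤ Real.exp (t * κ a ω - c) := Real.add_one_le_exp _
        have h2 : ξ a * Real.exp c * (t * κ a ω - c + 1)
            ≤ ξ a * Real.exp c * Real.exp (t * κ a ω - c) :=
          mul_le_mul_of_nonneg_left h1 (mul_nonneg (hξ a) (Real.exp_pos _).le)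
        calc Real.exp c * (t * (ξ a * κ a ω) + (1 - c) * ξ a)
            = ξ a * Real.exp c * (t * κ a ω - c + 1) := by ring
          _ ≤ ξ a * Real.exp c * Real.exp (t * κ a ω - c) := h2
          _ = ξ a * Real.exp (t * κ a ω) := by
              rw [mul_assoc, ← Real.exp_add]
              ring_nf
      have hsumL : Summable (fun a => Real.exp c * (t * (ξ a * κ a ω) + (1 - c) * ξ a)) :=
        Summable.mul_left _ ((hsumK.mul_left t).add (hsum.mul_left (1 - c)))
      have hle := Summable.tsum_le_tsum hterm hsumL hsumZ
      have hsum_eval : (∑' a, Real.exp c * (t * (ξ a * κ a ω) + (1 - c) * ξ a))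
          = Real.exp c * S := by
        rw [tsum_mul_left, Summable.tsum_add (hsumK.mul_left t) (hsum.mul_left (1 - c)),
          tsum_mul_left, tsum_mul_left]
        have hcS : c * S = t * W := by rw [hc]; field_simp
        have : t * W + (1 - c) * S = S := by nlinarith [hcS]
        rw [← hW, ← hS_def, this]
      rw [hsum_eval] at hle
      have h5 : Real.exp c ≤ Z / S := by
        rw [le_div_iff₀ hS]; linarith
      calc c = Real.log (Real.exp c) := (Real.log_exp c).symm
        _ ≤ Real.log (Z / S) := Real.log_le_log (Real.exp_pos c) h5
    have hlow2 : -(t * gg / S) ≤ t * W / S := by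
      have h1 : t * (-gg) ≤ t * W := by nlinarith [neg_abs_le W]
      have h2 : t * (-gg) / S ≤ t * W / S := (div_le_div_iff_of_pos_right hS).2 h1
      calc -(t * gg / S) = t * (-gg) / S := by ring
        _ ≤ t * W / S := h2
    have hDω : D ω = (t^2/4 - 1) + (Z/(S*m) + 2*t*(gg/S)) := by
      simp only [hD_def, hZr, ← hgg]
    have hggS : 0 ≤ t * gg / S := by positivity
    have hC : 2 * t * (gg / S) = 2 * (t * gg / S) := by ring
    rw [abs_le, hDω]
    constructor
    · linarith [hupper, hlower, hlow2, hggS, hC]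
    · linarith [hupper, hggS, hC]
  -- integrability
  have hXint : Integrable (fun ω => Real.log ((∑' a, ξ a * Real.exp (t * κ a ω)) / S)) :=
    iD.mono' hXmeas.aestronglyMeasurable
      (by filter_upwards [hbound] with ω h using by rwa [Real.norm_eq_abs])
  refine ⟨hXint, ?_⟩
  have h1 : ∫ ω, |Real.log ((∑' a, ξ a * Real.exp (t * κ a ω)) / S)| ∂ℙ ≤ ∫ ω, D ω ∂ℙ :=
    integral_mono_ae hXint.abs iD hbound
  have hFint : ∫ ω, (F ω).toReal ∂ℙ = S * m := by
    rw [integral_toReal hFmeas.aemeasurable (ae_lt_top hFmeas hFtop), hFlint,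
      ← ENNReal.ofReal_mul hS.le, ENNReal.toReal_ofReal (by positivity)]
  have hGint : ∫ ω, (G ω).toReal ∂ℙ = S * (Real.sqrt π)⁻¹ := by
    rw [integral_toReal hGmeas.aemeasurable (ae_lt_top hGmeas hGtop), hGlint,
      ← ENNReal.ofReal_mul hS.le, ENNReal.toReal_ofReal (by positivity)]
  have hDint : ∫ ω, D ω ∂ℙ = t^2/4 + 2*t*(Real.sqrt π)⁻¹ := by
    have e1 : ∫ ω, D ω ∂ℙ = ∫ ω, ((t^2/4 - 1) + ((F ω).toReal/(S*m) + 2*t*((G ω).toReal/S))) ∂ℙ := by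
      simp only [hD_def]
    have iF2 : Integrable (fun ω => (F ω).toReal/(S*m)) := iF.div_const _
    have iG2 : Integrable (fun ω => 2*t*((G ω).toReal/S)) := (iG.div_const _).const_mul (2*t)
    have iFG : Integrable (fun ω => (F ω).toReal/(S*m) + 2*t*((G ω).toReal/S)) := iF2.add iG2
    rw [e1, integral_add (integrable_const _) iFG, integral_add iF2 iG2,
      integral_div, integral_const_mul, integral_div, hFint, hGint, integral_const]
    simp only [measure_univ, probReal_univ, ENNReal.toReal_one, smul_eq_mul, one_mul]
    have hSm : S * m ≠ 0 := by positivity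
    have hSne : S ≠ 0 := ne_of_gt hS
    have hmne : m ≠ 0 := ne_of_gt hm
    field_simp
    ring
  have hsp : 0 < Real.sqrt π := Real.sqrt_pos.2 Real.pi_pos
  have hπ2 : 2 * (Real.sqrt π)⁻¹ ≤ Real.sqrt 2 := by
    have h24 : (2:ℝ) ≤ Real.sqrt 2 * Real.sqrt π := by
      rw [← Real.sqrt_mul (by norm_num : (0:ℝ) ≤ 2) π]
      have h4 : (2:ℝ) = Real.sqrt 4 := by
        rw [show (4:ℝ) = 2^2 by norm_num, Real.sqrt_sq (by norm_num : (0:ℝ) ≤ 2)]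
      rw [h4]
      exact Real.sqrt_le_sqrt (by nlinarith [Real.pi_gt_three])
    calc 2 * (Real.sqrt π)⁻¹ = 2 / Real.sqrt π := by ring
      _ ≤ Real.sqrt 2 := by rw [div_le_iff₀ hsp]; exact h24
  have ht2 : t^2 = β^2 * M := by
    rw [ht_def, mul_pow, Real.sq_sqrt (Nat.cast_nonneg M)]
  have hts : t * Real.sqrt 2 = β * Real.sqrt (2*M) := by
    rw [ht_def, Real.sqrt_mul (by norm_num : (0:ℝ) ≤ 2) (M:ℝ)]
    ring
  have h2 : 2*t*(Real.sqrt π)⁻¹ ≤ t * Real.sqrt 2 := by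
    calc 2*t*(Real.sqrt π)⁻¹ = t * (2 * (Real.sqrt π)⁻¹) := by ring
      _ ≤ t * Real.sqrt 2 := mul_le_mul_of_nonneg_left hπ2 ht
  refine le_trans h1 ?_
  rw [hDint]
  linarith [h2, ht2, hts]
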